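/- Let Comp_k ∈ {Top_k, Rand_k} and let Q_s : ℝ^d → ℝ^d be a randomized quantizer satisfying E_Q[Q_s(y)] = y and E_Q‖Q_s(y)‖² ≤ (1+β_{k,s})‖y‖² for all k-sparse y (where the second-moment bound on a k-sparse vector uses the constant β_{k,s}). If β_{k,s} < 1, then the composition Q_s∘Comp_k is a compression operator with coefficient γ = (1−β_{k,s})·(k/d), i.e., for every x ∈ ℝ^d, E_{C,Q}‖x − Q_s(Comp_k(x))‖₂² ≤ [1 − (1−β_{k,s})(k/d)]‖x‖₂². -/

import Mathlib

open MeasureTheory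
open scoped RealInnerProductSpace

/-- Compression of a composed operator: composing an unbiased randomized quantizer `Q`
(with second-moment blow-up `1 + β` on the `k`-sparse outputs of the sparsifier `C`)
with a sparsifier `C` satisfying `⟨x, C(x)⟩ = ‖C(x)‖²` and `E‖C(x)‖² ≥ (k/d)‖x‖²`
yields, when `β < 1`, a compression operator with coefficient `(1-β)(k/d)`. -/
theorem composed_operator_compression {ΩC ΩQ : Type*} [MeasurableSpace ΩC]
    [MeasurableSpace ΩQ] (μC : Measure ΩC) (μQ : Measure ΩQ)
    [IsProbabilityMeasure μC] [IsProbabilityMeasure μQ]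
    (d k : ℕ) (hd : 0 < d) (hk : 1 ≤ k) (hkd : k ≤ d)
    (β : ℝ) (hβ0 : 0 < β) (hβ : β < 1)
    (x : EuclideanSpace ℝ (Fin d))
    (C : ΩC → EuclideanSpace ℝ (Fin d))
    (Q : EuclideanSpace ℝ (Fin d) → ΩQ → EuclideanSpace ℝ (Fin d))
    (hQint : ∀ y, Integrable (fun ωq => Q y ωq) μQ)
    (hQunbiased : ∀ y, ∫ ωq, Q y ωq ∂μQ = y)
    (hQmoment : ∀ ωc, ∫ ωq, ‖Q (C ωc) ωq‖ ^ 2 ∂μQ ≤ (1 + β) * ‖C ωc‖ ^ 2)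
    (hCinner : ∀ ωc, ⟪x, C ωc⟫ = ‖C ωc‖ ^ 2)
    (hClower : (k : ℝ) / d * ‖x‖ ^ 2 ≤ ∫ ωc, ‖C ωc‖ ^ 2 ∂μC)
    (hCint : Integrable (fun ωc => ‖C ωc‖ ^ 2) μC)
    (hint : Integrable (fun ωc => ∫ ωq, ‖x - Q (C ωc) ωq‖ ^ 2 ∂μQ) μC) :
    ∫ ωc, ∫ ωq, ‖x - Q (C ωc) ωq‖ ^ 2 ∂μQ ∂μC ≤
      (1 - (1 - β) * ((k : ℝ) / d)) * ‖x‖ ^ 2 := by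

  -- pointwise bound on the inner integral
  have key : ∀ ωc, ∫ ωq, ‖x - Q (C ωc) ωq‖ ^ 2 ∂μQ ≤ ‖x‖ ^ 2 - (1 - β) * ‖C ωc‖ ^ 2 := by
    intro ωc
    set y := C ωc with hy
    have hyx : ‖y‖ ^ 2 ≤ ‖x‖ ^ 2 := by
      have h1 : ⟪x, y⟫ ≤ ‖x‖ * ‖y‖ := real_inner_le_norm x y
      have h2 := hCinner ωc
      nlinarith [norm_nonneg y, norm_nonneg x]
    by_cases hI : Integrable (fun ωq => ‖Q y ωq‖ ^ 2) μQ
    · have hinner : Integrable (fun ωq => ⟪x, Q y ωq⟫) μQ := (hQint y).const_inner x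
      have hexp : (fun ωq => ‖x - Q y ωq‖ ^ 2)
          = fun ωq => ‖x‖ ^ 2 - 2 * ⟪x, Q y ωq⟫ + ‖Q y ωq‖ ^ 2 := by
        funext ωq
        exact norm_sub_sq_real x (Q y ωq)
      have hsub : Integrable (fun ωq => ‖x‖ ^ 2 - 2 * ⟪x, Q y ωq⟫) μQ :=
        (integrable_const _).sub (hinner.const_mul 2)
      rw [hexp, integral_add hsub hI,
        integral_sub (integrable_const _) (hinner.const_mul 2), integral_const,
        integral_const_mul, integral_inner (hQint y), hQunbiased y, hCinner ωc]
      have := hQmoment ωc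
      simp only [measure_univ, ENNReal.toReal_one, probReal_univ, smul_eq_mul, one_mul]
      nlinarith
    · have hI2 : ¬ Integrable (fun ωq => ‖x - Q y ωq‖ ^ 2) μQ := by
        intro h
        apply hI
        have hinner : Integrable (fun ωq => ⟪x, Q y ωq⟫) μQ := (hQint y).const_inner x
        have : (fun ωq => ‖Q y ωq‖ ^ 2)
            = fun ωq => ‖x - Q y ωq‖ ^ 2 - (‖x‖ ^ 2 - 2 * ⟪x, Q y ωq⟫) := by
          funext ωq
          rw [norm_sub_sq_real x (Q y ωq)]
          ring
        rw [this]
        have hsub : Integrable (fun ωq => ‖x‖ ^ 2 - 2 * ⟪x, Q y ωq⟫) μQ :=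
          (integrable_const _).sub (hinner.const_mul 2)
        exact h.sub hsub
      rw [integral_undef hI2]
      nlinarith
  calc ∫ ωc, ∫ ωq, ‖x - Q (C ωc) ωq‖ ^ 2 ∂μQ ∂μC
      ≤ ∫ ωc, (‖x‖ ^ 2 - (1 - β) * ‖C ωc‖ ^ 2) ∂μC := by
        exact integral_mono hint ((integrable_const _).sub (hCint.const_mul _)) key
    _ = ‖x‖ ^ 2 - (1 - β) * ∫ ωc, ‖C ωc‖ ^ 2 ∂μC := by
        rw [integral_sub (integrable_const _) (hCint.const_mul _), integral_const,
          integral_const_mul]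
        simp
    _ ≤ (1 - (1 - β) * ((k : ℝ) / d)) * ‖x‖ ^ 2 := by nlinarith [hClower]
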